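/- (Generic sech²/sech⁴ solitary-wave sufficiency for c = 0, m = 1 limit of the quartic cnoidal ansatz.) Let a, b, d, σ, j0, j2, j4, k0, k2 ∈ ℝ and λ > 0, and define sech t = 1/cosh t, η(ξ) = j0 + j2·sech²(λξ) + j4·sech⁴(λξ), w(ξ) = k0 + k2·sech²(λξ). Suppose the five equations hold: j4·(20bλ²σ − k2) = 0; −24bλ²σj2 + 64bλ²σj4 − 24aλ²k2 − 4σj4 + 4j2k2 + 4j4k0 = 0; 8bλ²σj2 + 8aλ²k2 − 2σj2 + 2j0k2 + 2j2k0 + 2k2 = 0; −24dλ²σk2 + 2k2² + 4j4 = 0; 8dλ²σk2 − 2σk2 + 2k0k2 + 2j2 = 0. Then (η, w) satisfies, for all ξ ∈ ℝ, the traveling-wave ODE system of the abcd-system with c = 0: −σ·η′(ξ) + w′(ξ) + (η·w)′(ξ) + a·w‴(ξ) + b·σ·η‴(ξ) = 0 and −σ·w′(ξ) + η′(ξ) + w(ξ)·w′(ξ) + d·σ·w‴(ξ) = 0. -/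

import Mathlib

/-- Derivative of `tanh (lam * x)`. -/
lemma hasDerivAt_tanh_lam (lam ξ : ℝ) :
    HasDerivAt (fun x : ℝ => Real.tanh (lam * x))
      (lam * (1 - Real.tanh (lam * ξ) ^ 2)) ξ := by
  have hc : Real.cosh (lam * ξ) ≠ 0 := (Real.cosh_pos _).ne'
  have hg : HasDerivAt (fun x : ℝ => lam * x) lam ξ := by
    simpa using (hasDerivAt_id ξ).const_mul lam
  have hs : HasDerivAt (fun x : ℝ => Real.sinh (lam * x))
      (Real.cosh (lam * ξ) * lam) ξ := hg.sinh
  have hco : HasDerivAt (fun x : ℝ => Real.cosh (lam * x))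
      (Real.sinh (lam * ξ) * lam) ξ := hg.cosh
  have h : HasDerivAt (fun x : ℝ => Real.sinh (lam * x) / Real.cosh (lam * x)) _ ξ :=
    hs.div hco hc
  have heq : (fun x : ℝ => Real.sinh (lam * x) / Real.cosh (lam * x))
      = fun x : ℝ => Real.tanh (lam * x) := by
    funext x; rw [Real.tanh_eq_sinh_div_cosh]
  rw [heq] at h
  convert h using 1
  rw [Real.tanh_eq_sinh_div_cosh]
  have hid := Real.cosh_sq_sub_sinh_sq (lam * ξ)
  field_simp

/-- Derivative of a degree-7 polynomial in `tanh (lam * x)`. -/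
lemma tanh_poly_hasDerivAt (lam c0 c1 c2 c3 c4 c5 c6 c7 ξ : ℝ) :
    HasDerivAt (fun x : ℝ => c0 + c1 * Real.tanh (lam * x) + c2 * Real.tanh (lam * x) ^ 2
        + c3 * Real.tanh (lam * x) ^ 3 + c4 * Real.tanh (lam * x) ^ 4
        + c5 * Real.tanh (lam * x) ^ 5 + c6 * Real.tanh (lam * x) ^ 6
        + c7 * Real.tanh (lam * x) ^ 7)
      ((c1 + 2 * c2 * Real.tanh (lam * ξ) + 3 * c3 * Real.tanh (lam * ξ) ^ 2
        + 4 * c4 * Real.tanh (lam * ξ) ^ 3 + 5 * c5 * Real.tanh (lam * ξ) ^ 4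
        + 6 * c6 * Real.tanh (lam * ξ) ^ 5 + 7 * c7 * Real.tanh (lam * ξ) ^ 6)
        * (lam * (1 - Real.tanh (lam * ξ) ^ 2))) ξ := by
  have h := hasDerivAt_tanh_lam lam ξ
  have H := ((((((((hasDerivAt_const ξ c0).add (h.const_mul c1)).add
      ((h.pow 2).const_mul c2)).add ((h.pow 3).const_mul c3)).add
      ((h.pow 4).const_mul c4)).add ((h.pow 5).const_mul c5)).add
      ((h.pow 6).const_mul c6)).add ((h.pow 7).const_mul c7))
  simp only [Pi.add_def, Pi.pow_apply] at H
  refine H.congr_deriv ?_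
  push_cast
  ring

/-- generic sech²/sech⁴ solitary-wave sufficiency for `c = 0` (the
`m = 1` limit of the quartic cnoidal ansatz): if the five coefficient equations hold,
then `η = j0 + j2·sech²(λξ) + j4·sech⁴(λξ)`, `w = k0 + k2·sech²(λξ)` solve the
traveling-wave ODE system of the abcd-system with `c = 0`. -/
theorem abcd_sech_quartic_solitary_wave_c_eq_zero
    (a b d σ j0 j2 j4 k0 k2 lam : ℝ) (hlam : 0 < lam)
    (η w : ℝ → ℝ)
    (hη : ∀ ξ : ℝ, η ξ = j0 + j2 * (1 / Real.cosh (lam * ξ)) ^ 2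
        + j4 * (1 / Real.cosh (lam * ξ)) ^ 4)
    (hw : ∀ ξ : ℝ, w ξ = k0 + k2 * (1 / Real.cosh (lam * ξ)) ^ 2)
    (h1 : j4*(20*b*lam^2*σ - k2) = 0)
    (h2 : -24*b*lam^2*σ*j2 + 64*b*lam^2*σ*j4 - 24*a*lam^2*k2 - 4*σ*j4
        + 4*j2*k2 + 4*j4*k0 = 0)
    (h3 : 8*b*lam^2*σ*j2 + 8*a*lam^2*k2 - 2*σ*j2 + 2*j0*k2 + 2*j2*k0 + 2*k2 = 0)
    (h4 : -24*d*lam^2*σ*k2 + 2*k2^2 + 4*j4 = 0)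
    (h5 : 8*d*lam^2*σ*k2 - 2*σ*k2 + 2*k0*k2 + 2*j2 = 0) :
    ∀ ξ : ℝ,
      (-σ * deriv η ξ + deriv w ξ + deriv (fun x => η x * w x) ξ
        + a * deriv (deriv (deriv w)) ξ + b * σ * deriv (deriv (deriv η)) ξ = 0) ∧
      (-σ * deriv w ξ + deriv η ξ + w ξ * deriv w ξ
        + d * σ * deriv (deriv (deriv w)) ξ = 0) := by
  -- sech² = 1 - tanh²
  have hsech : ∀ u : ℝ, (1 / Real.cosh u) ^ 2 = 1 - Real.tanh u ^ 2 := by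
    intro u
    have hc : Real.cosh u ≠ 0 := (Real.cosh_pos _).ne'
    have hid := Real.cosh_sq_sub_sinh_sq u
    rw [Real.tanh_eq_sinh_div_cosh]
    field_simp
    try linarith
  -- canonical polynomial-in-tanh forms
  have hηf : η = fun x : ℝ => (j0 + j2 + j4) + 0 * Real.tanh (lam * x)
      + (-(j2 + 2 * j4)) * Real.tanh (lam * x) ^ 2 + 0 * Real.tanh (lam * x) ^ 3
      + j4 * Real.tanh (lam * x) ^ 4 + 0 * Real.tanh (lam * x) ^ 5
      + 0 * Real.tanh (lam * x) ^ 6 + 0 * Real.tanh (lam * x) ^ 7 := by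
    funext x
    have e := hsech (lam * x)
    rw [hη x]
    linear_combination (j2 + j4 * ((1 / Real.cosh (lam * x)) ^ 2
      + (1 - Real.tanh (lam * x) ^ 2))) * e
  have hwf : w = fun x : ℝ => (k0 + k2) + 0 * Real.tanh (lam * x)
      + (-k2) * Real.tanh (lam * x) ^ 2 + 0 * Real.tanh (lam * x) ^ 3
      + 0 * Real.tanh (lam * x) ^ 4 + 0 * Real.tanh (lam * x) ^ 5
      + 0 * Real.tanh (lam * x) ^ 6 + 0 * Real.tanh (lam * x) ^ 7 := by
    funext x
    have e := hsech (lam * x)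
    rw [hw x]
    linear_combination k2 * e
  -- first derivatives in canonical form
  have hη1 : deriv η = fun x : ℝ => (0 : ℝ)
      + (-2 * j2 * lam - 4 * j4 * lam) * Real.tanh (lam * x)
      + 0 * Real.tanh (lam * x) ^ 2
      + (2 * j2 * lam + 8 * j4 * lam) * Real.tanh (lam * x) ^ 3
      + 0 * Real.tanh (lam * x) ^ 4
      + (-4 * j4 * lam) * Real.tanh (lam * x) ^ 5
      + 0 * Real.tanh (lam * x) ^ 6 + 0 * Real.tanh (lam * x) ^ 7 := by
    funext x
    rw [hηf, (tanh_poly_hasDerivAt lam (j0 + j2 + j4) 0 (-(j2 + 2 * j4)) 0 j4 0 0 0 x).deriv]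
    ring
  have hw1 : deriv w = fun x : ℝ => (0 : ℝ)
      + (-2 * k2 * lam) * Real.tanh (lam * x)
      + 0 * Real.tanh (lam * x) ^ 2
      + (2 * k2 * lam) * Real.tanh (lam * x) ^ 3
      + 0 * Real.tanh (lam * x) ^ 4 + 0 * Real.tanh (lam * x) ^ 5
      + 0 * Real.tanh (lam * x) ^ 6 + 0 * Real.tanh (lam * x) ^ 7 := by
    funext x
    rw [hwf, (tanh_poly_hasDerivAt lam (k0 + k2) 0 (-k2) 0 0 0 0 0 x).deriv]
    ring
  -- second derivatives in canonical form
  have hη2 : deriv (deriv η) = fun x : ℝ => (-2 * j2 * lam ^ 2 - 4 * j4 * lam ^ 2)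
      + 0 * Real.tanh (lam * x)
      + (8 * j2 * lam ^ 2 + 28 * j4 * lam ^ 2) * Real.tanh (lam * x) ^ 2
      + 0 * Real.tanh (lam * x) ^ 3
      + (-6 * j2 * lam ^ 2 - 44 * j4 * lam ^ 2) * Real.tanh (lam * x) ^ 4
      + 0 * Real.tanh (lam * x) ^ 5
      + (20 * j4 * lam ^ 2) * Real.tanh (lam * x) ^ 6
      + 0 * Real.tanh (lam * x) ^ 7 := by
    funext x
    rw [hη1, (tanh_poly_hasDerivAt lam 0 (-2 * j2 * lam - 4 * j4 * lam) 0
      (2 * j2 * lam + 8 * j4 * lam) 0 (-4 * j4 * lam) 0 0 x).deriv]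
    ring
  have hw2 : deriv (deriv w) = fun x : ℝ => (-2 * k2 * lam ^ 2)
      + 0 * Real.tanh (lam * x)
      + (8 * k2 * lam ^ 2) * Real.tanh (lam * x) ^ 2
      + 0 * Real.tanh (lam * x) ^ 3
      + (-6 * k2 * lam ^ 2) * Real.tanh (lam * x) ^ 4
      + 0 * Real.tanh (lam * x) ^ 5
      + 0 * Real.tanh (lam * x) ^ 6 + 0 * Real.tanh (lam * x) ^ 7 := by
    funext x
    rw [hw1, (tanh_poly_hasDerivAt lam 0 (-2 * k2 * lam) 0 (2 * k2 * lam) 0 0 0 0 x).deriv]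
    ring
  intro ξ
  set t := Real.tanh (lam * ξ) with ht
  -- third derivatives pointwise
  have hη3 : deriv (deriv (deriv η)) ξ
      = (0 + 2 * (8 * j2 * lam ^ 2 + 28 * j4 * lam ^ 2) * t + 3 * 0 * t ^ 2
        + 4 * (-6 * j2 * lam ^ 2 - 44 * j4 * lam ^ 2) * t ^ 3 + 5 * 0 * t ^ 4
        + 6 * (20 * j4 * lam ^ 2) * t ^ 5 + 7 * 0 * t ^ 6) * (lam * (1 - t ^ 2)) := by
    rw [hη2, (tanh_poly_hasDerivAt lam (-2 * j2 * lam ^ 2 - 4 * j4 * lam ^ 2) 0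
      (8 * j2 * lam ^ 2 + 28 * j4 * lam ^ 2) 0 (-6 * j2 * lam ^ 2 - 44 * j4 * lam ^ 2) 0
      (20 * j4 * lam ^ 2) 0 ξ).deriv]
  have hw3 : deriv (deriv (deriv w)) ξ
      = (0 + 2 * (8 * k2 * lam ^ 2) * t + 3 * 0 * t ^ 2
        + 4 * (-6 * k2 * lam ^ 2) * t ^ 3 + 5 * 0 * t ^ 4 + 6 * 0 * t ^ 5
        + 7 * 0 * t ^ 6) * (lam * (1 - t ^ 2)) := by
    rw [hw2, (tanh_poly_hasDerivAt lam (-2 * k2 * lam ^ 2) 0 (8 * k2 * lam ^ 2) 0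
      (-6 * k2 * lam ^ 2) 0 0 0 ξ).deriv]
  -- derivative of the product
  have hηd : HasDerivAt η ((0 + (-2 * j2 * lam - 4 * j4 * lam) * t + 0 * t ^ 2
      + (2 * j2 * lam + 8 * j4 * lam) * t ^ 3 + 0 * t ^ 4 + (-4 * j4 * lam) * t ^ 5
      + 0 * t ^ 6 + 0 * t ^ 7)) ξ := by
    have h := (tanh_poly_hasDerivAt lam (j0 + j2 + j4) 0 (-(j2 + 2 * j4)) 0 j4 0 0 0 ξ)
    rw [hηf]
    convert h using 1
    ring
  have hwd : HasDerivAt w ((0 + (-2 * k2 * lam) * t + 0 * t ^ 2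
      + (2 * k2 * lam) * t ^ 3 + 0 * t ^ 4 + 0 * t ^ 5 + 0 * t ^ 6 + 0 * t ^ 7)) ξ := by
    have h := (tanh_poly_hasDerivAt lam (k0 + k2) 0 (-k2) 0 0 0 0 0 ξ)
    rw [hwf]
    convert h using 1
    ring
  have hprod : deriv (fun x => η x * w x) ξ = _ := (hηd.mul hwd).deriv
  constructor
  · rw [hη3, hw3, hprod, hη1, hw1, hηf, hwf]
    simp only []
    linear_combination (lam * t * (6 * (1 - t ^ 2) ^ 3)) * h1
      + (lam * t * (-(1 - t ^ 2) ^ 2)) * h2 + (lam * t * (t ^ 2 - 1)) * h3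
  · rw [hw3, hη1, hw1, hwf]
    simp only []
    linear_combination (lam * t * (t ^ 2 - 1)) * h5
      + (lam * t * (-(1 - t ^ 2) ^ 2)) * h4
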